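/- The one-qubit Clifford group, i.e. the normalizer of the Pauli group in U(2) modulo global phases, is generated by the images of the Hadamard gate H = (1/√2)[[1,1],[1,-1]] and the phase gate Q = [[1,0],[0,i]]. -/

import Mathlib

open Matrix

abbrev Mat2 := Matrix (Fin 2) (Fin 2) ℂ

def Xm : Mat2 := !![0, 1; 1, 0]
def Ym : Mat2 := !![0, -Complex.I; Complex.I, 0]
def Zm : Mat2 := !![1, 0; 0, -1]

lemma Xm_mem : Xm ∈ Matrix.unitaryGroup (Fin 2) ℂ := by
  rw [Matrix.mem_unitaryGroup_iff]
  ext i j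
  fin_cases i <;> fin_cases j <;>
    simp [Xm, Matrix.mul_apply, Fin.sum_univ_two, Matrix.star_apply, Matrix.one_apply]

lemma Ym_mem : Ym ∈ Matrix.unitaryGroup (Fin 2) ℂ := by
  rw [Matrix.mem_unitaryGroup_iff]
  ext i j
  fin_cases i <;> fin_cases j <;>
    simp [Ym, Matrix.mul_apply, Fin.sum_univ_two, Matrix.star_apply, Matrix.one_apply,
      Complex.ext_iff]

lemma Zm_mem : Zm ∈ Matrix.unitaryGroup (Fin 2) ℂ := by
  rw [Matrix.mem_unitaryGroup_iff]
  ext i j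
  fin_cases i <;> fin_cases j <;>
    simp [Zm, Matrix.mul_apply, Fin.sum_univ_two, Matrix.star_apply, Matrix.one_apply]

def Xu : Matrix.unitaryGroup (Fin 2) ℂ := ⟨Xm, Xm_mem⟩
def Yu : Matrix.unitaryGroup (Fin 2) ℂ := ⟨Ym, Ym_mem⟩
def Zu : Matrix.unitaryGroup (Fin 2) ℂ := ⟨Zm, Zm_mem⟩

/-- The one-qubit Pauli group `P₁ = ⟨X, Y, Z⟩ ⊆ U(2)`. -/
def PauliGroup : Subgroup (Matrix.unitaryGroup (Fin 2) ℂ) := Subgroup.closure {Xu, Yu, Zu}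

/-- The normalizer of the Pauli group in `U(2)`. -/
def PauliNormalizer : Subgroup (Matrix.unitaryGroup (Fin 2) ℂ) := Subgroup.normalizer (PauliGroup : Set (Matrix.unitaryGroup (Fin 2) ℂ))

/-- The subgroup of unit scalar multiples of the identity in `U(2)`. -/
def ScalarU : Subgroup (Matrix.unitaryGroup (Fin 2) ℂ) where
  carrier := {U | ∃ c : ℂ, (U : Mat2) = c • (1 : Mat2)}
  one_mem' := ⟨1, by simp⟩
  mul_mem' := by
    rintro a b ⟨c, hc⟩ ⟨d, hd⟩
    exact ⟨c * d, by
      have : ((a * b : Matrix.unitaryGroup (Fin 2) ℂ) : Mat2) = (a : Mat2) * b := rfl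
      rw [this, hc, hd, smul_mul_smul_comm, one_mul]⟩
  inv_mem' := by
    rintro a ⟨c, hc⟩
    refine ⟨(starRingEnd ℂ) c, ?_⟩
    have : ((a⁻¹ : Matrix.unitaryGroup (Fin 2) ℂ) : Mat2) = star (a : Mat2) := rfl
    rw [this, hc]
    simp [star_smul]

lemma ScalarU_conj_mem (u v : Matrix.unitaryGroup (Fin 2) ℂ) (hv : v ∈ ScalarU) :
    u * v * u⁻¹ ∈ ScalarU := by
  obtain ⟨c, hc⟩ := hv
  refine ⟨c, ?_⟩
  have h1 : ((u * v * u⁻¹ : Matrix.unitaryGroup (Fin 2) ℂ) : Mat2)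
      = (u : Mat2) * (v : Mat2) * ((u⁻¹ : Matrix.unitaryGroup (Fin 2) ℂ) : Mat2) := rfl
  have h2 : (u : Mat2) * ((u⁻¹ : Matrix.unitaryGroup (Fin 2) ℂ) : Mat2) = 1 :=
    congrArg (fun w : Matrix.unitaryGroup (Fin 2) ℂ => (w : Mat2)) (mul_inv_cancel u)
  rw [h1, hc, mul_smul_comm, mul_one, smul_mul_assoc, h2]

instance : (ScalarU.subgroupOf PauliNormalizer).Normal := by
  constructor
  intro n hmem g
  rw [Subgroup.mem_subgroupOf] at hmem ⊢
  exact ScalarU_conj_mem (g : Matrix.unitaryGroup (Fin 2) ℂ) n hmem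

/-- The one-qubit Clifford group: the normalizer of the Pauli group modulo global phases. -/
def Cliff1 := PauliNormalizer ⧸ (ScalarU.subgroupOf PauliNormalizer)

noncomputable instance : Group Cliff1 := QuotientGroup.Quotient.group _

noncomputable def Hm : Mat2 := (1 / (Real.sqrt 2 : ℂ)) • !![1, 1; 1, -1]
def Qm : Mat2 := !![1, 0; 0, Complex.I]


section Aux

noncomputable def pconj (U : Matrix.unitaryGroup (Fin 2) ℂ) (M : Mat2) : Mat2 :=
  (U : Mat2) * M * star (U : Mat2)

lemma pconj_mul (U V : Matrix.unitaryGroup (Fin 2) ℂ) (M : Mat2) :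
    pconj (U * V) M = pconj U (pconj V M) := by
  simp [pconj, Matrix.mul_assoc, Matrix.star_mul]

lemma pconj_neg (U : Matrix.unitaryGroup (Fin 2) ℂ) (M : Mat2) :
    pconj U (-M) = -pconj U M := by simp [pconj]

lemma pconj_one (M : Mat2) : pconj 1 M = M := by simp [pconj]

lemma star_Hm : star Hm = Hm := by
  ext i j
  fin_cases i <;> fin_cases j <;>
    simp [Hm, Matrix.star_apply, Matrix.conjTranspose_apply, ← Complex.ofReal_one,
      ← Complex.ofReal_div, Complex.conj_ofReal]

lemma hs2 : (Real.sqrt 2 : ℂ) * (Real.sqrt 2 : ℂ) = 2 := by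
  rw [← Complex.ofReal_mul]
  norm_num [Real.mul_self_sqrt]

lemma h2ne : (Real.sqrt 2 : ℂ) ≠ 0 := by
  intro h; have := hs2; rw [h] at this; norm_num at this

lemma pconj_H_X (Hu : Matrix.unitaryGroup (Fin 2) ℂ) (hHu : (Hu : Mat2) = Hm) :
    pconj Hu Xm = Zm := by
  rw [pconj, hHu, star_Hm]
  ext i j
  fin_cases i <;> fin_cases j <;>
    simp [Hm, Xm, Zm, Matrix.mul_apply, Fin.sum_univ_two] <;>
    field_simp <;> ring_nf <;> norm_num [pow_two, hs2]

lemma pconj_H_Z (Hu : Matrix.unitaryGroup (Fin 2) ℂ) (hHu : (Hu : Mat2) = Hm) :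
    pconj Hu Zm = Xm := by
  rw [pconj, hHu, star_Hm]
  ext i j
  fin_cases i <;> fin_cases j <;>
    simp [Hm, Xm, Zm, Matrix.mul_apply, Fin.sum_univ_two] <;>
    field_simp <;> ring_nf <;> norm_num [pow_two, hs2]

lemma pconj_H_Y (Hu : Matrix.unitaryGroup (Fin 2) ℂ) (hHu : (Hu : Mat2) = Hm) :
    pconj Hu Ym = -Ym := by
  rw [pconj, hHu, star_Hm]
  ext i j
  fin_cases i <;> fin_cases j <;>
    simp [Hm, Ym, Matrix.mul_apply, Fin.sum_univ_two] <;>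
    field_simp <;> ring_nf <;>
    norm_num [show ((Real.sqrt 2:ℂ))^4 = 4 by rw [show (4:ℕ)=2*2 from rfl, pow_mul, pow_two, pow_two, hs2]; norm_num,
      pow_two, hs2] <;> ring

lemma pconj_Q_X (Qu : Matrix.unitaryGroup (Fin 2) ℂ) (hQu : (Qu : Mat2) = Qm) :
    pconj Qu Xm = Ym := by
  rw [pconj, hQu]
  ext i j
  fin_cases i <;> fin_cases j <;>
    simp [Qm, Xm, Ym, Matrix.mul_apply, Fin.sum_univ_two, Matrix.star_apply]

lemma pconj_Q_Y (Qu : Matrix.unitaryGroup (Fin 2) ℂ) (hQu : (Qu : Mat2) = Qm) :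
    pconj Qu Ym = -Xm := by
  rw [pconj, hQu]
  ext i j
  fin_cases i <;> fin_cases j <;>
    simp [Qm, Xm, Ym, Matrix.mul_apply, Fin.sum_univ_two, Matrix.star_apply]

lemma pconj_Q_Z (Qu : Matrix.unitaryGroup (Fin 2) ℂ) (hQu : (Qu : Mat2) = Qm) :
    pconj Qu Zm = Zm := by
  rw [pconj, hQu]
  ext i j
  fin_cases i <;> fin_cases j <;>
    simp [Qm, Zm, Matrix.mul_apply, Fin.sum_univ_two, Matrix.star_apply]

lemma scalar_of_pconj_fix (V : Matrix.unitaryGroup (Fin 2) ℂ)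
    (hx : pconj V Xm = Xm) (hz : pconj V Zm = Zm) :
    ∃ c : ℂ, (V : Mat2) = c • (1 : Mat2) := by
  have hsV : (V : Mat2) * star (V : Mat2) = 1 :=
    (Matrix.mem_unitaryGroup_iff.mp V.2)
  have hVX : (V : Mat2) * Xm = Xm * (V : Mat2) := by
    have := congrArg (fun M => M * (V : Mat2)) hx
    simpa [pconj, Matrix.mul_assoc,
      (Matrix.mem_unitaryGroup_iff'.mp V.2)] using this
  have hVZ : (V : Mat2) * Zm = Zm * (V : Mat2) := by
    have := congrArg (fun M => M * (V : Mat2)) hz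
    simpa [pconj, Matrix.mul_assoc,
      (Matrix.mem_unitaryGroup_iff'.mp V.2)] using this
  refine ⟨(V : Mat2) 0 0, ?_⟩
  have e01 : (V : Mat2) 0 1 = 0 := by
    have := congrFun (congrFun hVZ 0) 1
    simp [Zm, Matrix.mul_apply, Fin.sum_univ_two] at this
    linear_combination -this / 2
  have e10 : (V : Mat2) 1 0 = 0 := by
    have := congrFun (congrFun hVZ 1) 0
    simp [Zm, Matrix.mul_apply, Fin.sum_univ_two] at this
    linear_combination this / 2
  have e11 : (V : Mat2) 1 1 = (V : Mat2) 0 0 := by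
    have := congrFun (congrFun hVX 0) 1
    simp [Xm, Matrix.mul_apply, Fin.sum_univ_two] at this
    exact this.symm
  ext i j
  fin_cases i <;> fin_cases j <;> simp [Matrix.one_apply, e01, e10, e11]


lemma mulXX : Xm * Xm = 1 := by
  ext i j; fin_cases i <;> fin_cases j <;>
    simp [Xm, Matrix.mul_apply, Fin.sum_univ_two, Matrix.one_apply]
lemma mulYY : Ym * Ym = 1 := by
  ext i j; fin_cases i <;> fin_cases j <;>
    simp [Ym, Matrix.mul_apply, Fin.sum_univ_two, Matrix.one_apply, Complex.ext_iff]
lemma mulZZ : Zm * Zm = 1 := by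
  ext i j; fin_cases i <;> fin_cases j <;>
    simp [Zm, Matrix.mul_apply, Fin.sum_univ_two, Matrix.one_apply]
lemma mulXY : Xm * Ym = Complex.I • Zm := by
  ext i j; fin_cases i <;> fin_cases j <;>
    simp [Xm, Ym, Zm, Matrix.mul_apply, Fin.sum_univ_two, Complex.ext_iff]
lemma mulYX : Ym * Xm = (-Complex.I) • Zm := by
  ext i j; fin_cases i <;> fin_cases j <;>
    simp [Xm, Ym, Zm, Matrix.mul_apply, Fin.sum_univ_two, Complex.ext_iff]
lemma mulXZ : Xm * Zm = (-Complex.I) • Ym := by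
  ext i j; fin_cases i <;> fin_cases j <;>
    simp [Xm, Ym, Zm, Matrix.mul_apply, Fin.sum_univ_two, Complex.ext_iff]
lemma mulZX : Zm * Xm = Complex.I • Ym := by
  ext i j; fin_cases i <;> fin_cases j <;>
    simp [Xm, Ym, Zm, Matrix.mul_apply, Fin.sum_univ_two, Complex.ext_iff]
lemma mulYZ : Ym * Zm = Complex.I • Xm := by
  ext i j; fin_cases i <;> fin_cases j <;>
    simp [Xm, Ym, Zm, Matrix.mul_apply, Fin.sum_univ_two, Complex.ext_iff]
lemma mulZY : Zm * Ym = (-Complex.I) • Xm := by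
  ext i j; fin_cases i <;> fin_cases j <;>
    simp [Xm, Ym, Zm, Matrix.mul_apply, Fin.sum_univ_two, Complex.ext_iff]
lemma starX : star Xm = Xm := by
  ext i j; fin_cases i <;> fin_cases j <;> simp [Xm, Matrix.star_apply]
lemma starY : star Ym = Ym := by
  ext i j; fin_cases i <;> fin_cases j <;> simp [Ym, Matrix.star_apply]
lemma starZ : star Zm = Zm := by
  ext i j; fin_cases i <;> fin_cases j <;> simp [Zm, Matrix.star_apply]

def IsPauliMat (M : Mat2) : Prop :=
  ∃ c : ℂ, c ^ 4 = 1 ∧ ∃ P ∈ ({1, Xm, Ym, Zm} : Set Mat2), M = c • P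

def PauliLike : Subgroup (Matrix.unitaryGroup (Fin 2) ℂ) where
  carrier := {U | IsPauliMat (U : Mat2)}
  one_mem' := ⟨1, by norm_num, 1, by simp, by simp⟩
  mul_mem' := by
    rintro a b ⟨c, hc, P, hP, hPa⟩ ⟨d, hd, Q, hQ, hQb⟩
    have hab : ((a * b : Matrix.unitaryGroup (Fin 2) ℂ) : Mat2)
        = (c * d) • (P * Q) := by
      have : ((a * b : Matrix.unitaryGroup (Fin 2) ℂ) : Mat2) = (a : Mat2) * b := rfl
      rw [this, hPa, hQb, Matrix.smul_mul, Matrix.mul_smul, smul_smul]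
    have hcd : (c * d) ^ 4 = 1 := by rw [mul_pow, hc, hd, one_mul]
    simp only [Set.mem_insert_iff, Set.mem_singleton_iff] at hP hQ
    rcases hP with rfl | rfl | rfl | rfl <;> rcases hQ with rfl | rfl | rfl | rfl <;>
      simp only [one_mul, mul_one, mulXX, mulYY, mulZZ, mulXY, mulYX, mulXZ, mulZX,
        mulYZ, mulZY, smul_smul] at hab <;>
      [ exact ⟨c*d, hcd, 1, by simp, hab⟩;
        exact ⟨c*d, hcd, Xm, by simp, hab⟩;
        exact ⟨c*d, hcd, Ym, by simp, hab⟩;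
        exact ⟨c*d, hcd, Zm, by simp, hab⟩;
        exact ⟨c*d, hcd, Xm, by simp, hab⟩;
        exact ⟨c*d, hcd, 1, by simp, hab⟩;
        exact ⟨c*d*Complex.I, by rw [mul_pow, hcd, one_mul, Complex.I_pow_four], Zm, by simp, hab⟩;
        exact ⟨c*d*(-Complex.I), by rw [mul_pow, hcd, one_mul, Even.neg_pow (by decide : Even 4), Complex.I_pow_four], Ym, by simp, hab⟩;
        exact ⟨c*d, hcd, Ym, by simp, hab⟩;
        exact ⟨c*d*(-Complex.I), by rw [mul_pow, hcd, one_mul, Even.neg_pow (by decide : Even 4), Complex.I_pow_four], Zm, by simp, hab⟩;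
        exact ⟨c*d, hcd, 1, by simp, hab⟩;
        exact ⟨c*d*Complex.I, by rw [mul_pow, hcd, one_mul, Complex.I_pow_four], Xm, by simp, hab⟩;
        exact ⟨c*d, hcd, Zm, by simp, hab⟩;
        exact ⟨c*d*Complex.I, by rw [mul_pow, hcd, one_mul, Complex.I_pow_four], Ym, by simp, hab⟩;
        exact ⟨c*d*(-Complex.I), by rw [mul_pow, hcd, one_mul, Even.neg_pow (by decide : Even 4), Complex.I_pow_four], Xm, by simp, hab⟩;
        exact ⟨c*d, hcd, 1, by simp, hab⟩ ]
  inv_mem' := by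
    rintro a ⟨c, hc, P, hP, hPa⟩
    refine ⟨starRingEnd ℂ c, by rw [← map_pow, hc, _root_.map_one], P, hP, ?_⟩
    have h1 : ((a⁻¹ : Matrix.unitaryGroup (Fin 2) ℂ) : Mat2) = star (a : Mat2) := rfl
    rw [h1, hPa, star_smul]
    simp only [Set.mem_insert_iff, Set.mem_singleton_iff] at hP
    rcases hP with rfl | rfl | rfl | rfl <;>
      simp [starX, starY, starZ, RCLike.star_def]

lemma pauli_le_pauliLike : PauliGroup ≤ PauliLike := by
  rw [PauliGroup, Subgroup.closure_le]
  rintro u hu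
  simp only [Set.mem_insert_iff, Set.mem_singleton_iff] at hu
  rcases hu with rfl | rfl | rfl
  · exact ⟨1, by norm_num, Xm, by simp, by simp [Xu]⟩
  · exact ⟨1, by norm_num, Ym, by simp, by simp [Yu]⟩
  · exact ⟨1, by norm_num, Zm, by simp, by simp [Zu]⟩

lemma pconj_pauli (U : Matrix.unitaryGroup (Fin 2) ℂ) (hU : U ∈ PauliNormalizer)
    (Mu : Matrix.unitaryGroup (Fin 2) ℂ) (hMu : Mu ∈ PauliGroup) :
    IsPauliMat (pconj U (Mu : Mat2)) := by
  have h := (Subgroup.mem_normalizer_iff.mp hU Mu).mp hMu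
  have h2 := pauli_le_pauliLike h
  have h3 : ((U * Mu * U⁻¹ : Matrix.unitaryGroup (Fin 2) ℂ) : Mat2)
      = pconj U (Mu : Mat2) := rfl
  have h4 : IsPauliMat ((U * Mu * U⁻¹ : Matrix.unitaryGroup (Fin 2) ℂ) : Mat2) := h2
  rwa [h3] at h4

lemma pconj_smul (U : Matrix.unitaryGroup (Fin 2) ℂ) (c : ℂ) (M : Mat2) :
    pconj U (c • M) = c • pconj U M := by
  simp [pconj, Matrix.smul_mul, Matrix.mul_smul]

lemma pconj_mulm (U : Matrix.unitaryGroup (Fin 2) ℂ) (M N : Mat2) :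
    pconj U M * pconj U N = pconj U (M * N) := by
  have h := Matrix.mem_unitaryGroup_iff'.mp U.2
  have key : ∀ A : Mat2, star (U : Mat2) * ((U : Mat2) * A) = A := by
    intro A; rw [← Matrix.mul_assoc, h, one_mul]
  simp [pconj, Matrix.mul_assoc, key]

lemma pconj_one' (U : Matrix.unitaryGroup (Fin 2) ℂ) : pconj U 1 = 1 := by
  simp [pconj, Matrix.mem_unitaryGroup_iff.mp U.2]

lemma pconj_form (U : Matrix.unitaryGroup (Fin 2) ℂ) (hU : U ∈ PauliNormalizer)
    (M : Mat2) (Mu : Matrix.unitaryGroup (Fin 2) ℂ) (hMu : Mu ∈ PauliGroup)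
    (hcoe : (Mu : Mat2) = M) (hM2 : M * M = 1) (htr : M.trace = 0) :
    ∃ s : ℂ, (s = 1 ∨ s = -1) ∧
      ∃ P, (P = Xm ∨ P = Ym ∨ P = Zm) ∧ pconj U M = s • P := by
  obtain ⟨c, hc, P, hP, hE⟩ := hcoe ▸ pconj_pauli U hU Mu hMu
  have htr0 : (pconj U M).trace = 0 := by
    have h' := Matrix.mem_unitaryGroup_iff'.mp U.2
    rw [pconj, Matrix.trace_mul_cycle, h', one_mul, htr]
  have hsq : pconj U M * pconj U M = 1 := by
    rw [pconj_mulm, hM2, pconj_one']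
  simp only [Set.mem_insert_iff, Set.mem_singleton_iff] at hP
  rcases hP with rfl | rfl | rfl | rfl
  · exfalso
    rw [hE] at htr0
    simp [Matrix.trace_smul, Matrix.trace_one] at htr0
    rw [htr0] at hc
    norm_num at hc
  all_goals {
    rw [hE] at hsq
    rw [Matrix.smul_mul, Matrix.mul_smul, smul_smul] at hsq
    first
      | rw [mulXX] at hsq
      | rw [mulYY] at hsq
      | rw [mulZZ] at hsq
    have hcc : c * c = 1 := by
      have h00 := congrFun (congrFun hsq 0) 0
      simpa [Matrix.one_apply] using h00
    exact ⟨c, mul_self_eq_one_iff.mp hcc, _, by tauto, hE⟩ }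

lemma pconj_anti (U : Matrix.unitaryGroup (Fin 2) ℂ) :
    pconj U Xm * pconj U Zm = -(pconj U Zm * pconj U Xm) := by
  rw [pconj_mulm, pconj_mulm, mulXZ, mulZX, pconj_smul, pconj_smul, neg_smul]

lemma mk_mem_of_word (Hu Qu : Matrix.unitaryGroup (Fin 2) ℂ)
    (hH : Hu ∈ PauliNormalizer) (hQ : Qu ∈ PauliNormalizer)
    (g w : PauliNormalizer)
    (hw : w ∈ Subgroup.closure {(⟨Hu, hH⟩ : PauliNormalizer), ⟨Qu, hQ⟩})
    (hx : pconj (w : Matrix.unitaryGroup (Fin 2) ℂ) Xm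
        = pconj (g : Matrix.unitaryGroup (Fin 2) ℂ) Xm)
    (hz : pconj (w : Matrix.unitaryGroup (Fin 2) ℂ) Zm
        = pconj (g : Matrix.unitaryGroup (Fin 2) ℂ) Zm) :
    (QuotientGroup.mk g : Cliff1) ∈ Subgroup.closure
      {(QuotientGroup.mk (⟨Hu, hH⟩ : PauliNormalizer) : Cliff1),
       (QuotientGroup.mk (⟨Qu, hQ⟩ : PauliNormalizer) : Cliff1)} := by
  have hcoe : ((w⁻¹ * g : PauliNormalizer) : Matrix.unitaryGroup (Fin 2) ℂ)
      = (w : Matrix.unitaryGroup (Fin 2) ℂ)⁻¹ * g := rfl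
  have hx' : pconj ((w⁻¹ * g : PauliNormalizer) : Matrix.unitaryGroup (Fin 2) ℂ) Xm = Xm := by
    rw [hcoe, pconj_mul, ← hx, ← pconj_mul, inv_mul_cancel, pconj_one]
  have hz' : pconj ((w⁻¹ * g : PauliNormalizer) : Matrix.unitaryGroup (Fin 2) ℂ) Zm = Zm := by
    rw [hcoe, pconj_mul, ← hz, ← pconj_mul, inv_mul_cancel, pconj_one]
  obtain ⟨c, hc⟩ := scalar_of_pconj_fix _ hx' hz'
  have hmem : w⁻¹ * g ∈ ScalarU.subgroupOf PauliNormalizer :=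
    Subgroup.mem_subgroupOf.mpr ⟨c, hc⟩
  have hmk : (QuotientGroup.mk w : Cliff1) = QuotientGroup.mk g :=
    (QuotientGroup.eq (s := ScalarU.subgroupOf PauliNormalizer)).mpr hmem
  rw [← hmk]
  have hmap := Subgroup.mem_map_of_mem
    (QuotientGroup.mk' (ScalarU.subgroupOf PauliNormalizer)) hw
  rw [MonoidHom.map_closure] at hmap
  simpa [Set.image_insert_eq] using hmap

end Aux

/-- The one-qubit Clifford group (the normalizer of the Pauli group in
`U(2)` modulo global phases) is generated by the images of the Hadamard gate `H` and
the phase gate `Q`. -/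
theorem clifford_generated_by_H_Q
    (Hu Qu : Matrix.unitaryGroup (Fin 2) ℂ)
    (hHu : (Hu : Mat2) = Hm) (hQu : (Qu : Mat2) = Qm)
    (hH : Hu ∈ PauliNormalizer) (hQ : Qu ∈ PauliNormalizer) :
    Subgroup.closure
      {(QuotientGroup.mk (⟨Hu, hH⟩ : PauliNormalizer) : Cliff1),
       (QuotientGroup.mk (⟨Qu, hQ⟩ : PauliNormalizer) : Cliff1)} = ⊤ := by
  rw [eq_top_iff]
  rintro x -
  obtain ⟨g, rfl⟩ := QuotientGroup.mk_surjective x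
  have pHX := pconj_H_X Hu hHu
  have pHY := pconj_H_Y Hu hHu
  have pHZ := pconj_H_Z Hu hHu
  have pQX := pconj_Q_X Qu hQu
  have pQY := pconj_Q_Y Qu hQu
  have pQZ := pconj_Q_Z Qu hQu
  obtain ⟨s, hs, P, hP, hxE⟩ := pconj_form (↑g) g.2 Xm Xu
    (Subgroup.subset_closure (by simp)) rfl mulXX (by simp [Xm, Matrix.trace_fin_two])
  obtain ⟨t, ht, R, hR, hzE⟩ := pconj_form (↑g) g.2 Zm Zu
    (Subgroup.subset_closure (by simp)) rfl mulZZ (by simp [Zm, Matrix.trace_fin_two])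
  have hanti := pconj_anti (↑g : Matrix.unitaryGroup (Fin 2) ℂ)
  set h : PauliNormalizer := ⟨Hu, hH⟩ with hhdef
  set q : PauliNormalizer := ⟨Qu, hQ⟩ with hqdef
  have hch : ((h : PauliNormalizer) : Matrix.unitaryGroup (Fin 2) ℂ) = Hu := rfl
  have hcq : ((q : PauliNormalizer) : Matrix.unitaryGroup (Fin 2) ℂ) = Qu := rfl
  have hh : h ∈ Subgroup.closure {h, q} := Subgroup.subset_closure (Set.mem_insert _ _)
  have hq' : q ∈ Subgroup.closure {h, q} :=
    Subgroup.subset_closure (Set.mem_insert_of_mem _ rfl)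
  rcases hP with rfl|rfl|rfl <;> rcases hR with rfl|rfl|rfl <;>
    [(exfalso;
      rw [hxE, hzE] at hanti;
      simp only [Matrix.smul_mul, Matrix.mul_smul, smul_smul, mulXX] at hanti;
      have h00 := congrFun (congrFun hanti 0) 0;
      simp [Matrix.one_apply] at h00;
      rcases hs with rfl|rfl <;> rcases ht with rfl|rfl <;> norm_num at h00);
    (rcases hs with rfl|rfl <;> rcases ht with rfl|rfl <;>
      [(refine mk_mem_of_word Hu Qu hH hQ g (q*h*q) (mul_mem (mul_mem (hq') hh) hq') ?_ ?_ <;>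
        [(rw [hxE]; simp [hch, hcq, pconj_mul, pconj_neg, pconj_one, pHX, pHY, pHZ, pQX, pQY, pQZ]); (rw [hzE]; simp [hch, hcq, pconj_mul, pconj_neg, pconj_one, pHX, pHY, pHZ, pQX, pQY, pQZ])]);
      (refine mk_mem_of_word Hu Qu hH hQ g (h*q*h) (mul_mem (mul_mem (hh) hq') hh) ?_ ?_ <;>
        [(rw [hxE]; simp [hch, hcq, pconj_mul, pconj_neg, pconj_one, pHX, pHY, pHZ, pQX, pQY, pQZ]); (rw [hzE]; simp [hch, hcq, pconj_mul, pconj_neg, pconj_one, pHX, pHY, pHZ, pQX, pQY, pQZ])]);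
      (refine mk_mem_of_word Hu Qu hH hQ g (q*q*h*q*h) (mul_mem (mul_mem (mul_mem (mul_mem (hq') hq') hh) hq') hh) ?_ ?_ <;>
        [(rw [hxE]; simp [hch, hcq, pconj_mul, pconj_neg, pconj_one, pHX, pHY, pHZ, pQX, pQY, pQZ]); (rw [hzE]; simp [hch, hcq, pconj_mul, pconj_neg, pconj_one, pHX, pHY, pHZ, pQX, pQY, pQZ])]);
      (refine mk_mem_of_word Hu Qu hH hQ g (q*q*q*h*q) (mul_mem (mul_mem (mul_mem (mul_mem (hq') hq') hq') hh) hq') ?_ ?_ <;>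
        [(rw [hxE]; simp [hch, hcq, pconj_mul, pconj_neg, pconj_one, pHX, pHY, pHZ, pQX, pQY, pQZ]); (rw [hzE]; simp [hch, hcq, pconj_mul, pconj_neg, pconj_one, pHX, pHY, pHZ, pQX, pQY, pQZ])])]);
    (rcases hs with rfl|rfl <;> rcases ht with rfl|rfl <;>
      [(refine mk_mem_of_word Hu Qu hH hQ g (1 : PauliNormalizer) (one_mem _) ?_ ?_ <;>
        [(rw [hxE]; simp [hch, hcq, pconj_mul, pconj_neg, pconj_one, pHX, pHY, pHZ, pQX, pQY, pQZ]); (rw [hzE]; simp [hch, hcq, pconj_mul, pconj_neg, pconj_one, pHX, pHY, pHZ, pQX, pQY, pQZ])]);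
      (refine mk_mem_of_word Hu Qu hH hQ g (h*q*q*h) (mul_mem (mul_mem (mul_mem (hh) hq') hq') hh) ?_ ?_ <;>
        [(rw [hxE]; simp [hch, hcq, pconj_mul, pconj_neg, pconj_one, pHX, pHY, pHZ, pQX, pQY, pQZ]); (rw [hzE]; simp [hch, hcq, pconj_mul, pconj_neg, pconj_one, pHX, pHY, pHZ, pQX, pQY, pQZ])]);
      (refine mk_mem_of_word Hu Qu hH hQ g (q*q) (mul_mem (hq') hq') ?_ ?_ <;>
        [(rw [hxE]; simp [hch, hcq, pconj_mul, pconj_neg, pconj_one, pHX, pHY, pHZ, pQX, pQY, pQZ]); (rw [hzE]; simp [hch, hcq, pconj_mul, pconj_neg, pconj_one, pHX, pHY, pHZ, pQX, pQY, pQZ])]);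
      (refine mk_mem_of_word Hu Qu hH hQ g (q*q*h*q*q*h) (mul_mem (mul_mem (mul_mem (mul_mem (mul_mem (hq') hq') hh) hq') hq') hh) ?_ ?_ <;>
        [(rw [hxE]; simp [hch, hcq, pconj_mul, pconj_neg, pconj_one, pHX, pHY, pHZ, pQX, pQY, pQZ]); (rw [hzE]; simp [hch, hcq, pconj_mul, pconj_neg, pconj_one, pHX, pHY, pHZ, pQX, pQY, pQZ])])]);
    (rcases hs with rfl|rfl <;> rcases ht with rfl|rfl <;>
      [(refine mk_mem_of_word Hu Qu hH hQ g (q*h*q*h) (mul_mem (mul_mem (mul_mem (hq') hh) hq') hh) ?_ ?_ <;>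
        [(rw [hxE]; simp [hch, hcq, pconj_mul, pconj_neg, pconj_one, pHX, pHY, pHZ, pQX, pQY, pQZ]); (rw [hzE]; simp [hch, hcq, pconj_mul, pconj_neg, pconj_one, pHX, pHY, pHZ, pQX, pQY, pQZ])]);
      (refine mk_mem_of_word Hu Qu hH hQ g (q*q*h*q) (mul_mem (mul_mem (mul_mem (hq') hq') hh) hq') ?_ ?_ <;>
        [(rw [hxE]; simp [hch, hcq, pconj_mul, pconj_neg, pconj_one, pHX, pHY, pHZ, pQX, pQY, pQZ]); (rw [hzE]; simp [hch, hcq, pconj_mul, pconj_neg, pconj_one, pHX, pHY, pHZ, pQX, pQY, pQZ])]);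
      (refine mk_mem_of_word Hu Qu hH hQ g (h*q) (mul_mem (hh) hq') ?_ ?_ <;>
        [(rw [hxE]; simp [hch, hcq, pconj_mul, pconj_neg, pconj_one, pHX, pHY, pHZ, pQX, pQY, pQZ]); (rw [hzE]; simp [hch, hcq, pconj_mul, pconj_neg, pconj_one, pHX, pHY, pHZ, pQX, pQY, pQZ])]);
      (refine mk_mem_of_word Hu Qu hH hQ g (q*q*q*h*q*h) (mul_mem (mul_mem (mul_mem (mul_mem (mul_mem (hq') hq') hq') hh) hq') hh) ?_ ?_ <;>
        [(rw [hxE]; simp [hch, hcq, pconj_mul, pconj_neg, pconj_one, pHX, pHY, pHZ, pQX, pQY, pQZ]); (rw [hzE]; simp [hch, hcq, pconj_mul, pconj_neg, pconj_one, pHX, pHY, pHZ, pQX, pQY, pQZ])])]);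
    (exfalso;
      rw [hxE, hzE] at hanti;
      simp only [Matrix.smul_mul, Matrix.mul_smul, smul_smul, mulYY] at hanti;
      have h00 := congrFun (congrFun hanti 0) 0;
      simp [Matrix.one_apply] at h00;
      rcases hs with rfl|rfl <;> rcases ht with rfl|rfl <;> norm_num at h00);
    (rcases hs with rfl|rfl <;> rcases ht with rfl|rfl <;>
      [(refine mk_mem_of_word Hu Qu hH hQ g (q) (hq') ?_ ?_ <;>
        [(rw [hxE]; simp [hch, hcq, pconj_mul, pconj_neg, pconj_one, pHX, pHY, pHZ, pQX, pQY, pQZ]); (rw [hzE]; simp [hch, hcq, pconj_mul, pconj_neg, pconj_one, pHX, pHY, pHZ, pQX, pQY, pQZ])]);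
      (refine mk_mem_of_word Hu Qu hH hQ g (q*h*q*q*h) (mul_mem (mul_mem (mul_mem (mul_mem (hq') hh) hq') hq') hh) ?_ ?_ <;>
        [(rw [hxE]; simp [hch, hcq, pconj_mul, pconj_neg, pconj_one, pHX, pHY, pHZ, pQX, pQY, pQZ]); (rw [hzE]; simp [hch, hcq, pconj_mul, pconj_neg, pconj_one, pHX, pHY, pHZ, pQX, pQY, pQZ])]);
      (refine mk_mem_of_word Hu Qu hH hQ g (q*q*q) (mul_mem (mul_mem (hq') hq') hq') ?_ ?_ <;>
        [(rw [hxE]; simp [hch, hcq, pconj_mul, pconj_neg, pconj_one, pHX, pHY, pHZ, pQX, pQY, pQZ]); (rw [hzE]; simp [hch, hcq, pconj_mul, pconj_neg, pconj_one, pHX, pHY, pHZ, pQX, pQY, pQZ])]);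
      (refine mk_mem_of_word Hu Qu hH hQ g (h*q*q*h*q) (mul_mem (mul_mem (mul_mem (mul_mem (hh) hq') hq') hh) hq') ?_ ?_ <;>
        [(rw [hxE]; simp [hch, hcq, pconj_mul, pconj_neg, pconj_one, pHX, pHY, pHZ, pQX, pQY, pQZ]); (rw [hzE]; simp [hch, hcq, pconj_mul, pconj_neg, pconj_one, pHX, pHY, pHZ, pQX, pQY, pQZ])])]);
    (rcases hs with rfl|rfl <;> rcases ht with rfl|rfl <;>
      [(refine mk_mem_of_word Hu Qu hH hQ g (h) (hh) ?_ ?_ <;>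
        [(rw [hxE]; simp [hch, hcq, pconj_mul, pconj_neg, pconj_one, pHX, pHY, pHZ, pQX, pQY, pQZ]); (rw [hzE]; simp [hch, hcq, pconj_mul, pconj_neg, pconj_one, pHX, pHY, pHZ, pQX, pQY, pQZ])]);
      (refine mk_mem_of_word Hu Qu hH hQ g (q*q*h) (mul_mem (mul_mem (hq') hq') hh) ?_ ?_ <;>
        [(rw [hxE]; simp [hch, hcq, pconj_mul, pconj_neg, pconj_one, pHX, pHY, pHZ, pQX, pQY, pQZ]); (rw [hzE]; simp [hch, hcq, pconj_mul, pconj_neg, pconj_one, pHX, pHY, pHZ, pQX, pQY, pQZ])]);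
      (refine mk_mem_of_word Hu Qu hH hQ g (h*q*q) (mul_mem (mul_mem (hh) hq') hq') ?_ ?_ <;>
        [(rw [hxE]; simp [hch, hcq, pconj_mul, pconj_neg, pconj_one, pHX, pHY, pHZ, pQX, pQY, pQZ]); (rw [hzE]; simp [hch, hcq, pconj_mul, pconj_neg, pconj_one, pHX, pHY, pHZ, pQX, pQY, pQZ])]);
      (refine mk_mem_of_word Hu Qu hH hQ g (q*q*h*q*q) (mul_mem (mul_mem (mul_mem (mul_mem (hq') hq') hh) hq') hq') ?_ ?_ <;>
        [(rw [hxE]; simp [hch, hcq, pconj_mul, pconj_neg, pconj_one, pHX, pHY, pHZ, pQX, pQY, pQZ]); (rw [hzE]; simp [hch, hcq, pconj_mul, pconj_neg, pconj_one, pHX, pHY, pHZ, pQX, pQY, pQZ])])]);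
    (rcases hs with rfl|rfl <;> rcases ht with rfl|rfl <;>
      [(refine mk_mem_of_word Hu Qu hH hQ g (q*h) (mul_mem (hq') hh) ?_ ?_ <;>
        [(rw [hxE]; simp [hch, hcq, pconj_mul, pconj_neg, pconj_one, pHX, pHY, pHZ, pQX, pQY, pQZ]); (rw [hzE]; simp [hch, hcq, pconj_mul, pconj_neg, pconj_one, pHX, pHY, pHZ, pQX, pQY, pQZ])]);
      (refine mk_mem_of_word Hu Qu hH hQ g (q*q*q*h) (mul_mem (mul_mem (mul_mem (hq') hq') hq') hh) ?_ ?_ <;>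
        [(rw [hxE]; simp [hch, hcq, pconj_mul, pconj_neg, pconj_one, pHX, pHY, pHZ, pQX, pQY, pQZ]); (rw [hzE]; simp [hch, hcq, pconj_mul, pconj_neg, pconj_one, pHX, pHY, pHZ, pQX, pQY, pQZ])]);
      (refine mk_mem_of_word Hu Qu hH hQ g (q*h*q*q) (mul_mem (mul_mem (mul_mem (hq') hh) hq') hq') ?_ ?_ <;>
        [(rw [hxE]; simp [hch, hcq, pconj_mul, pconj_neg, pconj_one, pHX, pHY, pHZ, pQX, pQY, pQZ]); (rw [hzE]; simp [hch, hcq, pconj_mul, pconj_neg, pconj_one, pHX, pHY, pHZ, pQX, pQY, pQZ])]);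
      (refine mk_mem_of_word Hu Qu hH hQ g (h*q*q*h*q*h) (mul_mem (mul_mem (mul_mem (mul_mem (mul_mem (hh) hq') hq') hh) hq') hh) ?_ ?_ <;>
        [(rw [hxE]; simp [hch, hcq, pconj_mul, pconj_neg, pconj_one, pHX, pHY, pHZ, pQX, pQY, pQZ]); (rw [hzE]; simp [hch, hcq, pconj_mul, pconj_neg, pconj_one, pHX, pHY, pHZ, pQX, pQY, pQZ])])]);
    (exfalso;
      rw [hxE, hzE] at hanti;
      simp only [Matrix.smul_mul, Matrix.mul_smul, smul_smul, mulZZ] at hanti;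
      have h00 := congrFun (congrFun hanti 0) 0;
      simp [Matrix.one_apply] at h00;
      rcases hs with rfl|rfl <;> rcases ht with rfl|rfl <;> norm_num at h00)]
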